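/- Block decomposition identity: partition {1,…,L} into N consecutive blocks T_0,…,T_{N−1} of size B (L = NB). Let Qᶜ, Vᵁ, Qᵁ, Kᵁ ∈ ℝ^{L×d}, let S = σ(QᵁKᵁᵀ/√d + Mᵁ) where Mᵁ_{ij}=0 for i<j and σ(−∞)=0 otherwise gives S_{ij}=0 for i≥j, and let Sᵁ = ((QᶜVᵁᵀ/√d) ⊙ M̃ᶜ) Sᵀ with M̃ᶜ the lower-triangular 0/1 mask. Then for all k ≥ 1 and 0 ≤ j ≤ N−1−k, the block (Sᵁ)_{T_{j+k},T_j} equals Qᶜ_{T_{j+k},:} · (Σ_{i=j}^{j+k−1} (Vᵁ_{T_i,:})ᵀ (S_{T_j,T_i})ᵀ)/√d + ((Qᶜ_{T_{j+k},:}(Vᵁ_{T_{j+k},:})ᵀ/√d) ⊙ M̃ᶜ_{T_{j+k},T_{j+k}}) (S_{T_j,T_{j+k}})ᵀ. -/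

import Mathlib

open Matrix

/-- The logistic sigmoid `σ(x) = 1/(1+e^{−x})`. -/
noncomputable def sigmoid (x : ℝ) : ℝ := 1 / (1 + Real.exp (-x))

/-- Global index of the `p`-th element of block `T_i` when `{0,…,N·B−1}` is partitioned
into `N` consecutive blocks of size `B`. -/
def gidx {N B : ℕ} (i : Fin N) (p : Fin B) : Fin (N * B) :=
  ⟨(i : ℕ) * B + (p : ℕ), by
    calc (i : ℕ) * B + (p : ℕ) < (i : ℕ) * B + B := by omega
      _ = ((i : ℕ) + 1) * B := by ring
      _ ≤ N * B := Nat.mul_le_mul_right B i.isLt⟩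

lemma gidx_bij (N B : ℕ) : Function.Bijective (fun ip : Fin N × Fin B => gidx ip.1 ip.2) := by
  have : (fun ip : Fin N × Fin B => gidx ip.1 ip.2) = finProdFinEquiv := by
    funext ip; apply Fin.ext; simp [gidx]; ring
  rw [this]; exact finProdFinEquiv.bijective

lemma sum_blocks {N B : ℕ} (f : Fin (N*B) → ℝ) :
    ∑ m, f m = ∑ i : Fin N, ∑ p : Fin B, f (gidx i p) := by
  rw [← Fintype.sum_prod_type (f := fun ip : Fin N × Fin B => f (gidx ip.1 ip.2))]
  exact (Fintype.sum_bijective _ (gidx_bij N B) _ _ (fun ip => rfl)).symm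

/-- block decomposition identity for the lookahead-score matrix
`Sᵁ = ((Qᶜ Vᵁᵀ/√d) ⊙ M̃ᶜ) Sᵀ`, with `S = σ(Qᵁ Kᵁᵀ/√d + Mᵁ)` (entries `0` on and below
the diagonal). For all `k ≥ 1` and `0 ≤ j ≤ N−1−k`, the block `(Sᵁ)_{T_{j+k},T_j}` equals
`Qᶜ_{T_{j+k},:} · (Σ_{i=j}^{j+k−1} (Vᵁ_{T_i,:})ᵀ (S_{T_j,T_i})ᵀ)/√d
 + ((Qᶜ_{T_{j+k},:}(Vᵁ_{T_{j+k},:})ᵀ/√d) ⊙ M̃ᶜ_{T_{j+k},T_{j+k}}) (S_{T_j,T_{j+k}})ᵀ`. -/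
theorem stmt8 (N B d : ℕ)
    (Qc Vu Qu Ku : Matrix (Fin (N * B)) (Fin d) ℝ)
    (S : Matrix (Fin (N * B)) (Fin (N * B)) ℝ)
    (hS : ∀ i j, S i j =
      if (i : ℕ) < (j : ℕ) then sigmoid ((Qu * Kuᵀ) i j / Real.sqrt d) else 0)
    (Su : Matrix (Fin (N * B)) (Fin (N * B)) ℝ)
    (hSu : Su = (Matrix.of fun i j =>
        (Qc * Vuᵀ) i j / Real.sqrt d * (if (j : ℕ) ≤ (i : ℕ) then (1 : ℝ) else 0)) * Sᵀ)
    (k j : ℕ) (hk : 1 ≤ k) (hjk : j + k ≤ N - 1) :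
    ∀ (r c : Fin B),
      Su (gidx ⟨j + k, by omega⟩ r) (gidx ⟨j, by omega⟩ c) =
        (∑ x : Fin d, Qc (gidx ⟨j + k, by omega⟩ r) x *
          (∑ i : Fin N, if j ≤ (i : ℕ) ∧ (i : ℕ) < j + k then
            ∑ p : Fin B, Vu (gidx i p) x * S (gidx ⟨j, by omega⟩ c) (gidx i p) else 0))
          / Real.sqrt d
        + ∑ p : Fin B,
            ((∑ x : Fin d, Qc (gidx ⟨j + k, by omega⟩ r) x * Vu (gidx ⟨j + k, by omega⟩ p) x)
              / Real.sqrt d * (if (p : ℕ) ≤ (r : ℕ) then (1 : ℝ) else 0)) *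
            S (gidx ⟨j, by omega⟩ c) (gidx ⟨j + k, by omega⟩ p) := by
  intro r c
  have hN : j + k < N := by omega
  have hNj : j < N := by omega
  set iJ : Fin N := ⟨j, hNj⟩ with hiJ
  set iJK : Fin N := ⟨j + k, hN⟩ with hiJK
  set gr := gidx iJK r with hgr
  set gc := gidx iJ c with hgc
  -- the generic summand
  subst hSu
  show (∑ m, (Qc * Vuᵀ) gr m / Real.sqrt d * (if (m : ℕ) ≤ (gr : ℕ) then (1:ℝ) else 0)
        * S gc m) = _
  rw [sum_blocks (fun m => (Qc * Vuᵀ) gr m / Real.sqrt d *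
        (if (m : ℕ) ≤ (gr : ℕ) then (1:ℝ) else 0) * S gc m)]
  -- per-block evaluation
  have key : ∀ i : Fin N,
      (∑ p : Fin B, (Qc * Vuᵀ) gr (gidx i p) / Real.sqrt d *
        (if ((gidx i p : Fin (N*B)) : ℕ) ≤ (gr : ℕ) then (1:ℝ) else 0) * S gc (gidx i p))
      = (if j ≤ (i : ℕ) ∧ (i : ℕ) < j + k then
            (∑ p : Fin B, (Qc * Vuᵀ) gr (gidx i p) * S gc (gidx i p)) / Real.sqrt d else 0)
        + (if i = iJK then
            ∑ p : Fin B, (Qc * Vuᵀ) gr (gidx i p) / Real.sqrt d *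
              (if (p : ℕ) ≤ (r : ℕ) then (1:ℝ) else 0) * S gc (gidx i p) else 0) := by
    intro i
    rcases lt_trichotomy ((i : ℕ)) (j + k) with hi | hi | hi
    · -- i < j + k : mask is 1
      have hmask : ∀ p : Fin B, ((gidx i p : Fin (N*B)) : ℕ) ≤ (gr : ℕ) := by
        intro p
        have h1 : ((i:ℕ)+1) * B ≤ (j+k) * B := Nat.mul_le_mul_right B (by omega)
        have h2 : ((i:ℕ)+1) * B = (i:ℕ)*B + B := by ring
        have h4 : (iJK : ℕ) * B = (j + k) * B := rfl
        simp only [hgr, gidx]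
        omega
      by_cases hij : j ≤ (i : ℕ)
      · -- middle blocks
        have hne : i ≠ iJK := by intro h; rw [h] at hi; simp [hiJK] at hi
        rw [if_pos ⟨hij, hi⟩, if_neg hne, add_zero, Finset.sum_div]
        refine Finset.sum_congr rfl fun p _ => ?_
        rw [if_pos (hmask p)]
        ring
      · -- low blocks: S vanishes
        have hne : i ≠ iJK := by
          intro h
          have hv : (i:ℕ) = j + k := by rw [h]
          omega
        rw [if_neg (by omega), if_neg hne, add_zero]
        refine Finset.sum_eq_zero fun p _ => ?_
        have hz : S gc (gidx i p) = 0 := by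
          rw [hS]
          refine if_neg ?_
          have h1 : ((i:ℕ)+1) * B ≤ j * B := Nat.mul_le_mul_right B (by omega)
          have h2 : ((i:ℕ)+1) * B = (i:ℕ)*B + B := by ring
          have h4 : (iJ : ℕ) * B = j * B := rfl
          simp only [hgc, gidx]
          omega
        rw [hz, mul_zero]
    · -- i = j + k
      have hieq : i = iJK := by apply Fin.ext; simpa [hiJK] using hi
      rw [if_neg (by omega), if_pos hieq, zero_add]
      refine Finset.sum_congr rfl fun p _ => ?_
      congr 1
      congr 1
      have : ((gidx i p : Fin (N*B)) : ℕ) ≤ (gr : ℕ) ↔ (p : ℕ) ≤ (r : ℕ) := by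
        simp only [hgr, gidx, hieq, hiJK]
        omega
      simp only [this]
    · -- i > j + k : mask vanishes
      have hne : i ≠ iJK := by intro h; rw [h] at hi; simp [hiJK] at hi
      rw [if_neg (by omega), if_neg hne, add_zero]
      refine Finset.sum_eq_zero fun p _ => ?_
      have hm : ¬ ((gidx i p : Fin (N*B)) : ℕ) ≤ (gr : ℕ) := by
        have h1 : (j+k+1) * B ≤ (i:ℕ) * B := Nat.mul_le_mul_right B (by omega)
        have h2 : (j+k+1) * B = (j+k)*B + B := by ring
        have h3 : (r : ℕ) < B := r.isLt
        have h4 : (iJK : ℕ) * B = (j + k) * B := rfl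
        simp only [hgr, gidx]
        omega
      rw [if_neg hm, mul_zero, zero_mul]
  simp only [key]
  rw [Finset.sum_add_distrib]
  congr 1
  · -- first term
    simp only [div_eq_mul_inv, Matrix.mul_apply, Matrix.transpose_apply,
      Finset.sum_mul, Finset.mul_sum, mul_ite, mul_zero, ite_mul, zero_mul]
    conv_rhs => rw [Finset.sum_comm]
    refine Finset.sum_congr rfl fun i _ => ?_
    by_cases hP : j ≤ (i:ℕ) ∧ (i:ℕ) < j + k
    · simp only [if_pos hP]
      conv_rhs => rw [Finset.sum_comm]
      exact Finset.sum_congr rfl fun p _ => Finset.sum_congr rfl fun x _ => by ring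
    · simp [if_neg hP]
  · -- second term
    rw [Finset.sum_ite_eq' Finset.univ iJK]
    rw [if_pos (Finset.mem_univ _)]
    refine Finset.sum_congr rfl fun p _ => ?_
    rw [Matrix.mul_apply]
    simp [transpose_apply, hgr]
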